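/- Let n, m, p ≥ 1, let A, Â ∈ ℝ^{n×m} have nonnegative entries with every row sum strictly positive, and let V ∈ ℝ^{m×p}. Let D := diag(A·1_m) and D̂ := diag(Â·1_m), where 1_m is the all-ones vector. Then ‖D̂^{-1} Â V − D^{-1} A V‖_max ≤ min( ‖((1/m)·D)^{-1}‖_max , ‖((1/m)·D̂)^{-1}‖_max ) · ( (1/m)·‖(Â − A)·V‖_max + (1/m)·‖A·1_m − Â·1_m‖_∞ · ‖V‖_max ), where ‖M‖_max denotes the maximum absolute entry of a matrix M and ‖v‖_∞ the maximum absolute entry of a vector v. -/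

import Mathlib

open Matrix Finset

noncomputable section

/-- Maximum absolute entry of a matrix. -/
def maxAbs {a b : ℕ} (M : Matrix (Fin a) (Fin b) ℝ) : ℝ := ⨆ i, ⨆ j, |M i j|

lemma abs_le_maxAbs {a b : ℕ} (M : Matrix (Fin a) (Fin b) ℝ) (i : Fin a) (j : Fin b) :
    |M i j| ≤ maxAbs M := by
  have h1 : |M i j| ≤ ⨆ j, |M i j| :=
    le_ciSup (f := fun j => |M i j|) (Set.Finite.bddAbove (Set.finite_range _)) j
  exact h1.trans (le_ciSup (f := fun i => ⨆ j, |M i j|) (Set.Finite.bddAbove (Set.finite_range _)) i)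

lemma maxAbs_le {a b : ℕ} (M : Matrix (Fin a) (Fin b) ℝ) {c : ℝ} (hc : 0 ≤ c)
    (h : ∀ i j, |M i j| ≤ c) : maxAbs M ≤ c :=
  Real.iSup_le (fun i => Real.iSup_le (h i) hc) hc

private lemma aux_bound (r s B Bh E Δ W : ℝ) (hr : 0 < r) (hs : 0 < s)
    (hW : 0 ≤ W) (hBB : |Bh - B| ≤ E) (hB : |B| ≤ r * W) (hΔ : |r - s| ≤ Δ) :
    |s⁻¹ * Bh - r⁻¹ * B| ≤ s⁻¹ * (E + Δ * W) := by
  have key : s⁻¹ * Bh - r⁻¹ * B = s⁻¹ * (Bh - B) + ((r - s) * (r⁻¹ * s⁻¹)) * B := by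
    field_simp
    ring
  rw [key]
  have h1 : |s⁻¹ * (Bh - B)| ≤ s⁻¹ * E := by
    rw [abs_mul, abs_of_pos (inv_pos.mpr hs)]
    exact mul_le_mul_of_nonneg_left hBB (le_of_lt (inv_pos.mpr hs))
  have h2 : |((r - s) * (r⁻¹ * s⁻¹)) * B| ≤ s⁻¹ * (Δ * W) := by
    rw [abs_mul, abs_mul, abs_of_pos (mul_pos (inv_pos.mpr hr) (inv_pos.mpr hs))]
    have hΔ0 : 0 ≤ Δ := le_trans (abs_nonneg _) hΔ
    calc |r - s| * (r⁻¹ * s⁻¹) * |B| ≤ Δ * (r⁻¹ * s⁻¹) * (r * W) := by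
          apply mul_le_mul _ hB (abs_nonneg _) (by positivity)
          exact mul_le_mul_of_nonneg_right hΔ (by positivity)
      _ = s⁻¹ * (Δ * W) := by
          field_simp
  calc |s⁻¹ * (Bh - B) + ((r - s) * (r⁻¹ * s⁻¹)) * B|
      ≤ |s⁻¹ * (Bh - B)| + |((r - s) * (r⁻¹ * s⁻¹)) * B| := abs_add_le _ _
    _ ≤ s⁻¹ * E + s⁻¹ * (Δ * W) := add_le_add h1 h2
    _ = s⁻¹ * (E + Δ * W) := by ring

theorem stmt15 {n m p : ℕ} (hn : 1 ≤ n) (hm : 1 ≤ m) (hp : 1 ≤ p)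
    (A Ahat : Matrix (Fin n) (Fin m) ℝ) (V : Matrix (Fin m) (Fin p) ℝ)
    (hA : ∀ i j, 0 ≤ A i j) (hAhat : ∀ i j, 0 ≤ Ahat i j)
    (hArow : ∀ i, 0 < ∑ j, A i j) (hAhatrow : ∀ i, 0 < ∑ j, Ahat i j)
    (D Dhat : Matrix (Fin n) (Fin n) ℝ)
    (hD : D = Matrix.diagonal (A *ᵥ fun _ => (1:ℝ)))
    (hDhat : Dhat = Matrix.diagonal (Ahat *ᵥ fun _ => (1:ℝ))) :
    maxAbs (Dhat⁻¹ * Ahat * V - D⁻¹ * A * V) ≤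
      min (maxAbs (((m : ℝ)⁻¹ • D)⁻¹)) (maxAbs (((m : ℝ)⁻¹ • Dhat)⁻¹)) *
        ((m : ℝ)⁻¹ * maxAbs ((Ahat - A) * V) +
         (m : ℝ)⁻¹ * (⨆ i, |(A *ᵥ fun _ => (1:ℝ)) i - (Ahat *ᵥ fun _ => (1:ℝ)) i|) *
           maxAbs V) := by
  haveI : NeZero n := ⟨Nat.one_le_iff_ne_zero.mp hn⟩
  haveI : NeZero m := ⟨Nat.one_le_iff_ne_zero.mp hm⟩
  haveI : NeZero p := ⟨Nat.one_le_iff_ne_zero.mp hp⟩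
  have hm0 : (0:ℝ) < m := by exact_mod_cast hm
  set r : Fin n → ℝ := fun i => ∑ j, A i j with hr
  set s : Fin n → ℝ := fun i => ∑ j, Ahat i j with hs
  have hAv : (A *ᵥ fun _ => (1:ℝ)) = r := by
    funext i; simp [Matrix.mulVec, dotProduct, hr]
  have hAhv : (Ahat *ᵥ fun _ => (1:ℝ)) = s := by
    funext i; simp [Matrix.mulVec, dotProduct, hs]
  simp only [hAv, hAhv] at hD hDhat ⊢
  -- inverses
  have hDinv : D⁻¹ = Matrix.diagonal (fun i => (r i)⁻¹) := by
    apply Matrix.inv_eq_right_inv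
    rw [hD, Matrix.diagonal_mul_diagonal]
    convert Matrix.diagonal_one with i
    exact mul_inv_cancel₀ (hArow i).ne'
  have hDhatinv : Dhat⁻¹ = Matrix.diagonal (fun i => (s i)⁻¹) := by
    apply Matrix.inv_eq_right_inv
    rw [hDhat, Matrix.diagonal_mul_diagonal]
    convert Matrix.diagonal_one with i
    exact mul_inv_cancel₀ (hAhatrow i).ne'
  have hDs : ((m:ℝ)⁻¹ • D)⁻¹ = Matrix.diagonal (fun i => (m:ℝ) * (r i)⁻¹) := by
    apply Matrix.inv_eq_right_inv
    rw [hD, ← Matrix.diagonal_smul, Matrix.diagonal_mul_diagonal]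
    convert Matrix.diagonal_one with i
    simp only [Pi.smul_apply, smul_eq_mul]
    field_simp [(hArow i).ne']
    exact div_self (hArow i).ne'
  have hDhats : ((m:ℝ)⁻¹ • Dhat)⁻¹ = Matrix.diagonal (fun i => (m:ℝ) * (s i)⁻¹) := by
    apply Matrix.inv_eq_right_inv
    rw [hDhat, ← Matrix.diagonal_smul, Matrix.diagonal_mul_diagonal]
    convert Matrix.diagonal_one with i
    simp only [Pi.smul_apply, smul_eq_mul]
    field_simp [(hAhatrow i).ne']
    exact div_self (hAhatrow i).ne'
  set S := maxAbs (((m:ℝ)⁻¹ • D)⁻¹) with hS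
  set Sh := maxAbs (((m:ℝ)⁻¹ • Dhat)⁻¹) with hSh
  set E := maxAbs ((Ahat - A) * V) with hE
  set Δ := ⨆ i, |r i - s i| with hΔdef
  set W := maxAbs V with hW
  have hWnn : 0 ≤ W := le_trans (abs_nonneg _) (abs_le_maxAbs V ⟨0, hm⟩ ⟨0, hp⟩)
  have hE0 : 0 ≤ E := le_trans (abs_nonneg _) (abs_le_maxAbs ((Ahat - A) * V) ⟨0, hn⟩ ⟨0, hp⟩)
  have hΔi : ∀ i, |r i - s i| ≤ Δ := fun i =>
    le_ciSup (f := fun i => |r i - s i|) (Set.Finite.bddAbove (Set.finite_range _)) i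
  have hΔ0 : 0 ≤ Δ := le_trans (abs_nonneg _) (hΔi ⟨0, hn⟩)
  have hS0 : 0 ≤ S := le_trans (abs_nonneg _) (abs_le_maxAbs (((m:ℝ)⁻¹ • D)⁻¹) ⟨0, hn⟩ ⟨0, hn⟩)
  have hSh0 : 0 ≤ Sh := le_trans (abs_nonneg _) (abs_le_maxAbs (((m:ℝ)⁻¹ • Dhat)⁻¹) ⟨0, hn⟩ ⟨0, hn⟩)
  have hSb : ∀ i, (r i)⁻¹ ≤ (m:ℝ)⁻¹ * S := by
    intro i
    have h : |(m:ℝ) * (r i)⁻¹| ≤ S := by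
      rw [hS, hDs]
      simpa using abs_le_maxAbs (Matrix.diagonal fun i => (m:ℝ) * (r i)⁻¹) i i
    have hpos : 0 ≤ (m:ℝ) * (r i)⁻¹ := by
      have := (hArow i); positivity
    rw [abs_of_nonneg hpos] at h
    calc (r i)⁻¹ = (m:ℝ)⁻¹ * ((m:ℝ) * (r i)⁻¹) := by field_simp
      _ ≤ (m:ℝ)⁻¹ * S := mul_le_mul_of_nonneg_left h (by positivity)
  have hShb : ∀ i, (s i)⁻¹ ≤ (m:ℝ)⁻¹ * Sh := by
    intro i
    have h : |(m:ℝ) * (s i)⁻¹| ≤ Sh := by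
      rw [hSh, hDhats]
      simpa using abs_le_maxAbs (Matrix.diagonal fun i => (m:ℝ) * (s i)⁻¹) i i
    have hpos : 0 ≤ (m:ℝ) * (s i)⁻¹ := by
      have := (hAhatrow i); positivity
    rw [abs_of_nonneg hpos] at h
    calc (s i)⁻¹ = (m:ℝ)⁻¹ * ((m:ℝ) * (s i)⁻¹) := by field_simp
      _ ≤ (m:ℝ)⁻¹ * Sh := mul_le_mul_of_nonneg_left h (by positivity)
  have entry : ∀ (i : Fin n) (k : Fin p), (Dhat⁻¹ * Ahat * V - D⁻¹ * A * V) i k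
      = (s i)⁻¹ * (Ahat * V) i k - (r i)⁻¹ * (A * V) i k := by
    intro i k
    rw [Matrix.sub_apply, Matrix.mul_assoc, Matrix.mul_assoc, hDinv, hDhatinv,
      Matrix.diagonal_mul, Matrix.diagonal_mul]
  have hB : ∀ (i : Fin n) (k : Fin p), |(A * V) i k| ≤ r i * W := by
    intro i k
    rw [Matrix.mul_apply]
    calc |∑ j, A i j * V j k| ≤ ∑ j, |A i j * V j k| := Finset.abs_sum_le_sum_abs _ _
      _ ≤ ∑ j, A i j * W := by
          apply Finset.sum_le_sum
          intro j _
          rw [abs_mul, abs_of_nonneg (hA i j)]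
          exact mul_le_mul_of_nonneg_left (abs_le_maxAbs V j k) (hA i j)
      _ = r i * W := by rw [← Finset.sum_mul]
  have hBh : ∀ (i : Fin n) (k : Fin p), |(Ahat * V) i k| ≤ s i * W := by
    intro i k
    rw [Matrix.mul_apply]
    calc |∑ j, Ahat i j * V j k| ≤ ∑ j, |Ahat i j * V j k| := Finset.abs_sum_le_sum_abs _ _
      _ ≤ ∑ j, Ahat i j * W := by
          apply Finset.sum_le_sum
          intro j _
          rw [abs_mul, abs_of_nonneg (hAhat i j)]
          exact mul_le_mul_of_nonneg_left (abs_le_maxAbs V j k) (hAhat i j)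
      _ = s i * W := by rw [← Finset.sum_mul]
  have hBB : ∀ (i : Fin n) (k : Fin p), |(Ahat * V) i k - (A * V) i k| ≤ E := by
    intro i k
    rw [hE, show (Ahat * V) i k - (A * V) i k = ((Ahat - A) * V) i k by
      rw [Matrix.sub_mul, Matrix.sub_apply]]
    exact abs_le_maxAbs _ i k
  have hc0 : 0 ≤ E + Δ * W := by positivity
  have hRHS0 : 0 ≤ min S Sh * ((m:ℝ)⁻¹ * E + (m:ℝ)⁻¹ * Δ * W) := by
    apply mul_nonneg (le_min hS0 hSh0)
    positivity
  apply maxAbs_le _ hRHS0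
  intro i k
  rw [entry i k]
  have h1 : |(s i)⁻¹ * (Ahat * V) i k - (r i)⁻¹ * (A * V) i k| ≤ (s i)⁻¹ * (E + Δ * W) :=
    aux_bound (r i) (s i) _ _ E Δ W (hArow i) (hAhatrow i) hWnn (hBB i k) (hB i k) (hΔi i)
  have h2 : |(s i)⁻¹ * (Ahat * V) i k - (r i)⁻¹ * (A * V) i k| ≤ (r i)⁻¹ * (E + Δ * W) := by
    rw [abs_sub_comm]
    exact aux_bound (s i) (r i) _ _ E Δ W (hAhatrow i) (hArow i) hWnn
      (by rw [abs_sub_comm]; exact hBB i k) (hBh i k) (by rw [abs_sub_comm]; exact hΔi i)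
  have hmin : min ((r i)⁻¹) ((s i)⁻¹) ≤ (m:ℝ)⁻¹ * min S Sh := by
    rcases le_total S Sh with h | h
    · rw [min_eq_left h]; exact (min_le_left _ _).trans (hSb i)
    · rw [min_eq_right h]; exact (min_le_right _ _).trans (hShb i)
  calc |(s i)⁻¹ * (Ahat * V) i k - (r i)⁻¹ * (A * V) i k|
      ≤ min ((r i)⁻¹) ((s i)⁻¹) * (E + Δ * W) := by
        rcases le_total ((r i)⁻¹) ((s i)⁻¹) with h | h
        · rw [min_eq_left h]; exact h2
        · rw [min_eq_right h]; exact h1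
    _ ≤ ((m:ℝ)⁻¹ * min S Sh) * (E + Δ * W) := mul_le_mul_of_nonneg_right hmin hc0
    _ = min S Sh * ((m:ℝ)⁻¹ * E + (m:ℝ)⁻¹ * Δ * W) := by ring

end
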